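/- Let (d_k) be a real sequence with |d_{k+1} - d_k| ≤ Tμ for all k, and let φ ∈ (-1,1). If a real sequence (ê_k) satisfies ê_{k+1} = 2Γ(d_{k+1} - d_{k-1}) + φ ê_{k-1} for all k ≥ 1, then limsup_{k→∞} |ê_k| ≤ 4|Γ|Tμ/(1-|φ|). -/

import Mathlib

open Filter

theorem stmt_5 (T μ Γ φ : ℝ) (hT : 0 < T) (hμ : 0 < μ) (hφ : φ ∈ Set.Ioo (-1:ℝ) 1)
    (d e : ℕ → ℝ) (hd : ∀ k, |d (k+1) - d k| ≤ T * μ)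
    (he : ∀ k, 1 ≤ k → e (k+1) = 2 * Γ * (d (k+1) - d (k-1)) + φ * e (k-1)) :
    Filter.limsup (fun k => |e k|) Filter.atTop ≤ 4 * |Γ| * T * μ / (1 - |φ|) := by
  obtain ⟨hφ1, hφ2⟩ := hφ
  set q := |φ| with hq
  have hq0 : 0 ≤ q := abs_nonneg _
  have hq1 : q < 1 := abs_lt.mpr ⟨hφ1, hφ2⟩
  have h1q : 0 < 1 - q := by linarith
  set C := 4 * |Γ| * T * μ with hC
  have hC0 : 0 ≤ C := by positivity
  set L := C / (1 - q) with hL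
  have hL0 : 0 ≤ L := div_nonneg hC0 h1q.le
  have hLC : C + q * L = L := by
    rw [hL]; field_simp [h1q.ne']
    ring
  set M := max |e 0| |e 1| with hM
  have hM0 : 0 ≤ M := le_trans (abs_nonneg _) (le_max_left _ _)
  -- key bound
  have key : ∀ n, |e n| ≤ L + q ^ (n / 2) * M ∧ |e (n+1)| ≤ L + q ^ ((n+1) / 2) * M := by
    intro n
    induction n with
    | zero =>
      constructor
      · simpa using by nlinarith [le_max_left |e 0| |e 1|]
      · simpa using by nlinarith [le_max_right |e 0| |e 1|]
    | succ m ih =>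
      refine ⟨ih.2, ?_⟩
      have hrec := he (m+1) (by omega)
      simp only [Nat.add_sub_cancel] at hrec
      have hd2 : |d (m+2) - d m| ≤ 2 * (T * μ) := by
        have h1 := hd (m+1)
        have h2 := hd m
        calc |d (m+2) - d m| = |(d (m+2) - d (m+1)) + (d (m+1) - d m)| := by ring_nf
          _ ≤ |d (m+2) - d (m+1)| + |d (m+1) - d m| := abs_add_le _ _
          _ ≤ 2 * (T * μ) := by linarith
      have hstep : |e (m+2)| ≤ C + q * |e m| := by
        rw [hrec]
        calc |2 * Γ * (d (m+2) - d m) + φ * e m|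
            ≤ |2 * Γ * (d (m+2) - d m)| + |φ * e m| := abs_add_le _ _
          _ = 2 * |Γ| * |d (m+2) - d m| + q * |e m| := by
              rw [abs_mul, abs_mul, abs_mul]; simp [hq]
          _ ≤ 2 * |Γ| * (2 * (T * μ)) + q * |e m| := by
              have : 0 ≤ 2 * |Γ| := by positivity
              nlinarith
          _ = C + q * |e m| := by rw [hC]; ring
      have hdiv : (m + 2) / 2 = m / 2 + 1 := by omega
      calc |e (m+2)| ≤ C + q * |e m| := hstep
        _ ≤ C + q * (L + q ^ (m / 2) * M) := by nlinarith [ih.1]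
        _ = L + q ^ (m / 2 + 1) * M := by rw [pow_succ]; linarith [hLC]
        _ = L + q ^ ((m + 2) / 2) * M := by rw [hdiv]
  -- convergence of the bound
  have htend : Tendsto (fun n : ℕ => L + q ^ (n / 2) * M) atTop (nhds L) := by
    have h2 : Tendsto (fun n : ℕ => n / 2) atTop atTop := by
      apply tendsto_atTop_atTop.mpr
      intro b
      exact ⟨2 * b, fun a ha => by omega⟩
    have hpow : Tendsto (fun n : ℕ => q ^ (n / 2)) atTop (nhds 0) :=
      (tendsto_pow_atTop_nhds_zero_of_lt_one hq0 hq1).comp h2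
    have : Tendsto (fun n : ℕ => L + q ^ (n / 2) * M) atTop (nhds (L + 0 * M)) :=
      tendsto_const_nhds.add (hpow.mul tendsto_const_nhds)
    simpa using this
  have hle : limsup (fun k => |e k|) atTop ≤ limsup (fun n : ℕ => L + q ^ (n / 2) * M) atTop := by
    apply limsup_le_limsup
    · exact Eventually.of_forall (fun n => (key n).1)
    · exact IsBoundedUnder.isCoboundedUnder_le (isBoundedUnder_of ⟨0, fun n => show |e n| ≥ 0 from abs_nonneg _⟩)
    · exact htend.isBoundedUnder_le
  calc limsup (fun k => |e k|) atTop ≤ _ := hle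
    _ = L := htend.limsup_eq
    _ = 4 * |Γ| * T * μ / (1 - |φ|) := by rw [hL, hC]
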